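/- Let h_n : ℝⁿ → ℝ (n ≥ 1) satisfy: (1) h_{n+1}(ε₁,...,ε_j,0,ε_{j+1},...,εₙ) = h_n(ε₁,...,εₙ); (2) ∂h_n/∂ε_j = 0 whenever ε_j = 0; (3) permutation symmetry; and (4) |D^α h_n| ≤ B uniformly for all multi-indices α = (α₁,...,α_r) with r ≤ 3, each α_j ≥ 2, and Σ_j (α_j − 2) ≤ 1. Then there exists a function h_∞ : [0,∞) → ℝ such that for all n and all ε ∈ ℝⁿ: |h_n(ε₁,...,εₙ) − h_∞(‖ε‖₂)| ≤ c · B · max(1, ‖ε‖₂³) · Σ_{j=1}^n |ε_j|³, where c is an absolute constant. -/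

import Mathlib

open Finset

/-- Partial derivative of `f : ℝᵏ → ℝ` in the `j`-th coordinate. -/
noncomputable def pd {k : ℕ} (j : Fin k) (f : (Fin k → ℝ) → ℝ) : (Fin k → ℝ) → ℝ :=
  fun x => deriv (fun s => f (Function.update x j s)) (x j)

/-- The mixed partial derivative `D^α` of order `α q` in the coordinate `ι q`,
for `q = 0, …, r-1`. -/
noncomputable def pdMulti {k r : ℕ} (ι : Fin r → Fin k) (α : Fin r → ℕ)
    (f : (Fin k → ℝ) → ℝ) : (Fin k → ℝ) → ℝ :=
  (List.ofFn fun q : Fin r => (pd (ι q))^[α q]).foldr (fun op g => op g) f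

namespace Stmt19

lemma abs_le_of_uIcc {t u : ℝ} (h : t ∈ Set.uIcc 0 u) : |t| ≤ |u| := by
  rcases Set.mem_uIcc.1 h with ⟨h1, h2⟩ | ⟨h1, h2⟩
  · rw [abs_of_nonneg h1, abs_of_nonneg (h1.trans h2)]; exact h2
  · rw [abs_of_nonpos h2, abs_of_nonpos (h2.trans' h1)]; linarith

lemma mvt_bound {f f' : ℝ → ℝ} {C u : ℝ}
    (hd : ∀ t ∈ Set.uIcc 0 u, HasDerivAt f (f' t) t)
    (hb : ∀ t ∈ Set.uIcc 0 u, |f' t| ≤ C) : |f u - f 0| ≤ C * |u| := by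
  have := (convex_uIcc (0:ℝ) u).norm_image_sub_le_of_norm_hasDerivWithin_le
    (fun t ht => (hd t ht).hasDerivWithinAt) (fun t ht => by simpa using hb t ht)
    Set.left_mem_uIcc Set.right_mem_uIcc
  simpa using this

lemma cube_taylor {f f1 f2 f3 : ℝ → ℝ} {B : ℝ}
    (h1 : ∀ t, HasDerivAt f (f1 t) t) (h2 : ∀ t, HasDerivAt f1 (f2 t) t)
    (h3 : ∀ t, HasDerivAt f2 (f3 t) t) (h10 : f1 0 = 0)
    (hB : ∀ t, |f3 t| ≤ B) (u : ℝ) :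
    |f u - f 0 - u^2/2 * f2 0| ≤ B * |u|^3 := by
  have hB0 : 0 ≤ B := (abs_nonneg _).trans (hB 0)
  -- second derivative of the adjusted function
  have s2 : ∀ t ∈ Set.uIcc 0 u, |f2 t - f2 0| ≤ B * |u| := by
    intro t ht
    have h := mvt_bound (f := f2) (f' := f3) (u := t) (fun τ _ => h3 τ) (fun τ _ => hB τ)
    have h2' := abs_le_of_uIcc ht
    nlinarith [abs_nonneg t]
  have s1 : ∀ t ∈ Set.uIcc 0 u, |f1 t - t * f2 0| ≤ (B * |u|) * |u| := by
    intro t ht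
    have hder : ∀ τ ∈ Set.uIcc 0 t, HasDerivAt (fun τ => f1 τ - τ * f2 0) (f2 τ - f2 0) τ := by
      intro τ hτ
      simpa using (h2 τ).fun_sub ((hasDerivAt_id τ).mul_const (f2 0))
    have hsub : Set.uIcc 0 t ⊆ Set.uIcc 0 u :=
      Set.uIcc_subset_uIcc Set.left_mem_uIcc ht
    have h := mvt_bound hder (fun τ hτ => s2 τ (hsub hτ))
    simp only [zero_mul, sub_zero, h10] at h
    have h2' := abs_le_of_uIcc ht
    nlinarith [abs_nonneg t, abs_nonneg u, mul_nonneg hB0 (abs_nonneg u)]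
  have hder0 : ∀ t ∈ Set.uIcc 0 u,
      HasDerivAt (fun t => f t - t^2/2 * f2 0) (f1 t - t * f2 0) t := by
    intro t ht
    have h' : HasDerivAt (fun t : ℝ => t^2/2 * f2 0) (t * f2 0) t := by
      have hp : HasDerivAt (fun t : ℝ => t^2/2) t t := by
        simpa using ((hasDerivAt_pow 2 t).div_const 2)
      simpa using hp.mul_const (f2 0)
    simpa using (h1 t).fun_sub h'
  have s0 := mvt_bound (f := fun t => f t - t^2/2 * f2 0) (f' := fun t => f1 t - t * f2 0)
    (u := u) hder0 s1
  have e : f u - f 0 - u^2/2 * f2 0 = (f u - u^2/2*f2 0) - (f 0 - 0^2/2*f2 0) := by ring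
  rw [e]
  calc |(f u - u^2/2*f2 0) - (f 0 - 0^2/2*f2 0)| ≤ ((B * |u|) * |u|) * |u| := by
        simpa using s0
    _ = B * |u|^3 := by ring

lemma hasDerivAt_pd {N : ℕ} {g : (Fin N → ℝ) → ℝ} (hg : Differentiable ℝ g)
    (x : Fin N → ℝ) (j : Fin N) (t : ℝ) :
    HasDerivAt (fun s => g (Function.update x j s)) (pd j g (Function.update x j t)) t := by
  have hdiff : DifferentiableAt ℝ (fun s => g (Function.update x j s)) t :=
    DifferentiableAt.comp t (hg _) (hasDerivAt_update x j t).differentiableAt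
  have h1 := hdiff.hasDerivAt
  have e : pd j g (Function.update x j t) = deriv (fun s => g (Function.update x j s)) t := by
    simp [pd, Function.update_idem]
  rw [e]; exact h1

lemma pd_eq_fderiv {N : ℕ} {g : (Fin N → ℝ) → ℝ} (hg : Differentiable ℝ g)
    (j : Fin N) (x : Fin N → ℝ) : pd j g x = fderiv ℝ g x (Pi.single j 1) := by
  have hA := hasDerivAt_pd hg x j (x j)
  rw [Function.update_eq_self] at hA
  have h1' : HasFDerivAt g (fderiv ℝ g x) (Function.update x j (x j)) := by
    rw [Function.update_eq_self]; exact (hg x).hasFDerivAt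
  have hB := h1'.comp_hasDerivAt (x j) (hasDerivAt_update x j (x j))
  exact hA.unique hB

lemma contDiff_pd {N : ℕ} {g : (Fin N → ℝ) → ℝ} {m : ℕ} (hg : ContDiff ℝ (m+1) g) (j : Fin N) :
    ContDiff ℝ m (pd j g) := by
  have hd : Differentiable ℝ g := hg.differentiable (by simp)
  have e : pd j g = fun x => fderiv ℝ g x (Pi.single j 1) := funext (pd_eq_fderiv hd j)
  rw [e]
  exact (hg.fderiv_right (by push_cast; exact le_refl _)).clm_apply contDiff_const

lemma hasDerivAt_cons {n : ℕ} {g : (Fin (n+1) → ℝ) → ℝ} (hg : Differentiable ℝ g)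
    (y : Fin n → ℝ) (t : ℝ) :
    HasDerivAt (fun s => g (Fin.cons s y)) (pd 0 g (Fin.cons t y)) t := by
  have h := hasDerivAt_pd hg (Fin.cons t y : Fin (n+1) → ℝ) 0 t
  simpa [Fin.update_cons_zero] using h

structure Good (h : (n : ℕ) → (Fin n → ℝ) → ℝ) (B : ℝ) : Prop where
  pos : 0 < B
  smooth : ∀ n, ContDiff ℝ 3 (h n)
  ins : ∀ (n : ℕ) (j : Fin (n + 1)) (ε : Fin n → ℝ), h (n + 1) (Fin.insertNth j 0 ε) = h n ε
  vanish : ∀ (n : ℕ) (j : Fin n) (ε : Fin n → ℝ), ε j = 0 → pd j (h n) ε = 0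
  symm : ∀ (n : ℕ) (σ : Equiv.Perm (Fin n)) (ε : Fin n → ℝ), h n (ε ∘ σ) = h n ε
  bdd : ∀ (n r : ℕ), r ≤ 3 → ∀ (ι : Fin r → Fin n), Function.Injective ι →
      ∀ α : Fin r → ℕ, (∀ q, 2 ≤ α q) → (∑ q, (α q - 2)) ≤ 1 →
      ∀ ε : Fin n → ℝ, |pdMulti ι α (h n) ε| ≤ B

variable {h : (n : ℕ) → (Fin n → ℝ) → ℝ} {B : ℝ}

lemma pdMulti_zero {n : ℕ} (ι : Fin 0 → Fin n) (α : Fin 0 → ℕ) (f : (Fin n → ℝ) → ℝ) :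
    pdMulti ι α f = f := by
  simp [pdMulti]

lemma pdMulti_one {n : ℕ} (j : Fin n) (k : ℕ) (f : (Fin n → ℝ) → ℝ) :
    pdMulti ![j] ![k] f = (pd j)^[k] f := by
  simp [pdMulti]

lemma Good.bdd0 (hg : Good h B) (n : ℕ) (ε : Fin n → ℝ) : |h n ε| ≤ B := by
  have := hg.bdd n 0 (by norm_num) (fun q => q.elim0) (fun a b _ => a.elim0)
    (fun q => q.elim0) (fun q => q.elim0) (by simp) ε
  simpa [pdMulti_zero] using this

lemma Good.bdd2 (hg : Good h B) (n : ℕ) (j : Fin n) (ε : Fin n → ℝ) :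
    |pd j (pd j (h n)) ε| ≤ B := by
  have := hg.bdd n 1 (by norm_num) ![j] (fun a b _ => Subsingleton.elim a b)
    ![2] (fun q => by fin_cases q <;> norm_num) (by simp) ε
  simpa [pdMulti_one] using this

lemma Good.bdd3 (hg : Good h B) (n : ℕ) (j : Fin n) (ε : Fin n → ℝ) :
    |pd j (pd j (pd j (h n))) ε| ≤ B := by
  have := hg.bdd n 1 (by norm_num) ![j] (fun a b _ => Subsingleton.elim a b)
    ![3] (fun q => by fin_cases q <;> norm_num) (by simp) ε
  simpa [pdMulti_one] using this

noncomputable def HL (h : (n : ℕ) → (Fin n → ℝ) → ℝ) (l : List ℝ) : ℝ := h l.length l.get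

lemma Good.h_congr_perm (hg : Good h B) {n : ℕ} {ε ε' : Fin n → ℝ}
    (hp : (List.ofFn ε).Perm (List.ofFn ε')) : h n ε = h n ε' := by
  have key : ε ∘ Tuple.sort ε = ε' ∘ Tuple.sort ε' := by
    apply List.ofFn_injective
    exact List.Perm.eq_of_sortedLE
      (List.sortedLE_ofFn_iff.2 (Tuple.monotone_sort ε)) (List.sortedLE_ofFn_iff.2 (Tuple.monotone_sort ε'))
      (((Tuple.sort ε).ofFn_comp_perm ε).trans (hp.trans ((Tuple.sort ε').ofFn_comp_perm ε').symm))
  calc h n ε = h n (ε ∘ Tuple.sort ε) := (hg.symm n (Tuple.sort ε) ε).symm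
    _ = h n (ε' ∘ Tuple.sort ε') := by rw [key]
    _ = h n ε' := hg.symm n _ ε'

lemma h_cast (h : (n : ℕ) → (Fin n → ℝ) → ℝ) {m n : ℕ} (e : m = n) (ε : Fin n → ℝ) :
    h n ε = h m (fun i => ε (Fin.cast e i)) := by
  subst e; rfl

lemma ofFn_get_cast {α : Type*} (l : List α) {n : ℕ} (e : n = l.length) :
    List.ofFn (fun i : Fin n => l.get (Fin.cast e i)) = l := by
  subst e; exact List.ofFn_get l

lemma Good.HL_perm (hg : Good h B) {l l' : List ℝ} (hp : l.Perm l') : HL h l = HL h l' := by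
  have e : l.length = l'.length := hp.length_eq
  have e2 : HL h l' = h l.length (fun i => l'.get (Fin.cast e i)) :=
    h_cast h e l'.get
  rw [e2]
  apply hg.h_congr_perm
  rw [List.ofFn_get l, ofFn_get_cast l' e]
  exact hp

lemma get_cons (a : ℝ) (l : List ℝ) : (a :: l).get = Fin.cons a l.get := by
  funext i
  cases i using Fin.cases <;> rfl

lemma HL_cons (h : (n : ℕ) → (Fin n → ℝ) → ℝ) (a : ℝ) (l : List ℝ) :
    HL h (a :: l) = h (l.length + 1) (Fin.cons a l.get) := by
  show h (l.length + 1) ((a :: l).get) = _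
  rw [get_cons]

lemma Good.HL_cons_zero (hg : Good h B) (l : List ℝ) : HL h (0 :: l) = HL h l := by
  rw [HL_cons, ← Fin.insertNth_zero' (0:ℝ) l.get]
  exact hg.ins l.length 0 l.get

noncomputable def GG (h : (n : ℕ) → (Fin n → ℝ) → ℝ) (l : List ℝ) : ℝ :=
  pd 0 (pd 0 (h (l.length + 1))) (Fin.cons 0 l.get)

lemma Good.GG_bdd (hg : Good h B) (l : List ℝ) : |GG h l| ≤ B :=
  hg.bdd2 (l.length + 1) 0 _

lemma Good.expand (hg : Good h B) (l : List ℝ) (u : ℝ) :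
    |HL h (u :: l) - HL h l - u^2/2 * GG h l| ≤ B * |u|^3 := by
  have hsm := hg.smooth (l.length + 1)
  have hd0 : Differentiable ℝ (h (l.length + 1)) := hsm.differentiable (by norm_num)
  have hc2 : ContDiff ℝ 2 (pd 0 (h (l.length + 1))) := by
    have := contDiff_pd (m := 2) (g := h (l.length + 1)) (by exact_mod_cast hsm) 0
    exact_mod_cast this
  have hd1 : Differentiable ℝ (pd 0 (h (l.length + 1))) := hc2.differentiable (by norm_num)
  have hc1 : ContDiff ℝ 1 (pd 0 (pd 0 (h (l.length + 1)))) := by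
    have := contDiff_pd (m := 1) (g := pd 0 (h (l.length + 1))) (by exact_mod_cast hc2) 0
    exact_mod_cast this
  have hd2 : Differentiable ℝ (pd 0 (pd 0 (h (l.length + 1)))) := hc1.differentiable (by norm_num)
  have E := cube_taylor (f := fun t => h (l.length + 1) (Fin.cons t l.get))
    (f1 := fun t => pd 0 (h (l.length + 1)) (Fin.cons t l.get))
    (f2 := fun t => pd 0 (pd 0 (h (l.length + 1))) (Fin.cons t l.get))
    (f3 := fun t => pd 0 (pd 0 (pd 0 (h (l.length + 1)))) (Fin.cons t l.get))
    (fun t => hasDerivAt_cons hd0 l.get t)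
    (fun t => hasDerivAt_cons hd1 l.get t)
    (fun t => hasDerivAt_cons hd2 l.get t)
    (hg.vanish (l.length + 1) 0 (Fin.cons 0 l.get) (by simp))
    (fun t => hg.bdd3 (l.length + 1) 0 _) u
  have e1 : h (l.length + 1) (Fin.cons u l.get) = HL h (u :: l) := (HL_cons h u l).symm
  have e0 : h (l.length + 1) (Fin.cons 0 l.get) = HL h l := by
    rw [← Fin.insertNth_zero' (0:ℝ) l.get]; exact hg.ins l.length 0 l.get
  simpa [GG, e1, e0] using E

lemma abs_comb4 {a b c d : ℝ} : |a + b - c - d| ≤ |a| + |b| + |c| + |d| := by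
  have k1 := abs_sub (a + b) (c + d)
  have k2 := abs_add_le a b
  have k3 := abs_add_le c d
  have e : a + b - c - d = (a + b) - (c + d) := by ring
  rw [e]; linarith

lemma eq_zero_of_abs_le_linear {a C : ℝ} (hC : 0 ≤ C) (H : ∀ u : ℝ, 0 < u → |a| ≤ C * u) :
    a = 0 := by
  by_contra ha
  have h0 : 0 < |a| := abs_pos.2 ha
  rcases eq_or_lt_of_le hC with hC0 | hC0
  · have := H 1 one_pos; rw [← hC0] at this; nlinarith
  · have := H (|a| / (2 * C)) (by positivity)
    have e : C * (|a| / (2 * C)) = |a| / 2 := by field_simp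
    rw [e] at this; linarith

lemma Good.GG_eq_of (hg : Good h B) {l l' : List ℝ}
    (hl : ∀ u : ℝ, HL h (u :: l) = HL h (u :: l')) (h0 : HL h l = HL h l') :
    GG h l = GG h l' := by
  have hB0 : 0 ≤ B := hg.pos.le
  have key : ∀ u : ℝ, 0 < u → |GG h l - GG h l'| ≤ (4 * B) * u := by
    intro u hu
    have E1 := hg.expand l u
    have E2 := hg.expand l' u
    rw [hl u, h0] at E1
    have tri : |u^2/2 * GG h l' - u^2/2 * GG h l| ≤ 2 * B * |u|^3 := by
      have k := abs_sub (HL h (u :: l') - HL h l' - u^2/2 * GG h l)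
        (HL h (u :: l') - HL h l' - u^2/2 * GG h l')
      have e : (HL h (u :: l') - HL h l' - u^2/2 * GG h l) -
          (HL h (u :: l') - HL h l' - u^2/2 * GG h l') =
          u^2/2 * GG h l' - u^2/2 * GG h l := by ring
      rw [e] at k; linarith
    have e2 : u^2/2 * GG h l' - u^2/2 * GG h l = -(u^2/2 * (GG h l - GG h l')) := by ring
    rw [e2, abs_neg, abs_mul, abs_of_nonneg (by positivity : (0:ℝ) ≤ u^2/2)] at tri
    have hau : |u| = u := abs_of_pos hu
    rw [hau] at tri
    nlinarith [pow_pos hu 2, abs_nonneg (GG h l - GG h l')]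
  have := eq_zero_of_abs_le_linear (by positivity) key
  linarith [this, (sub_eq_zero.1 this)]

lemma Good.GG_perm (hg : Good h B) {l l' : List ℝ} (hp : l.Perm l') : GG h l = GG h l' :=
  hg.GG_eq_of (fun u => hg.HL_perm (hp.cons u)) (hg.HL_perm hp)

lemma Good.GG_cons_zero (hg : Good h B) (l : List ℝ) : GG h (0 :: l) = GG h l := by
  refine hg.GG_eq_of (fun u => ?_) (hg.HL_cons_zero l)
  calc HL h (u :: 0 :: l) = HL h (0 :: u :: l) := hg.HL_perm (List.Perm.swap _ _ _)
    _ = HL h (u :: l) := hg.HL_cons_zero _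

lemma Good.key (hg : Good h B) (l : List ℝ) (u v : ℝ) :
    |u^2 * (GG h (v :: l) - GG h l) - v^2 * (GG h (u :: l) - GG h l)|
      ≤ 4 * B * (|u|^3 + |v|^3) := by
  have E1 := hg.expand (v :: l) u
  have E2 := hg.expand l v
  have E3 := hg.expand (u :: l) v
  have E4 := hg.expand l u
  have hswap : HL h (v :: u :: l) = HL h (u :: v :: l) := hg.HL_perm (List.Perm.swap _ _ _)
  rw [hswap] at E3
  set A1 := HL h (u :: v :: l) - HL h (u :: l) - v^2/2 * GG h (u :: l) with hA1
  set A2 := HL h (u :: l) - HL h l - u^2/2 * GG h l with hA2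
  set A3 := HL h (u :: v :: l) - HL h (v :: l) - u^2/2 * GG h (v :: l) with hA3
  set A4 := HL h (v :: l) - HL h l - v^2/2 * GG h l with hA4
  have e : u^2 * (GG h (v :: l) - GG h l) - v^2 * (GG h (u :: l) - GG h l)
      = 2 * (A1 + A2 - A3 - A4) := by rw [hA1, hA2, hA3, hA4]; ring
  rw [e, abs_mul, abs_two]
  have := abs_comb4 (a := A1) (b := A2) (c := A3) (d := A4)
  linarith

lemma Good.GG_lip (hg : Good h B) (l : List ℝ) (u : ℝ) :
    |GG h (u :: l) - GG h l| ≤ 24 * B * (|u| + u^2) := by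
  have hB0 : 0 < B := hg.pos
  set d : ℝ → ℝ := fun w => GG h (w :: l) - GG h l with hd
  have db : ∀ w, |d w| ≤ 2 * B := by
    intro w
    have h1 := hg.GG_bdd (w :: l); have h2 := hg.GG_bdd l
    have := abs_sub (GG h (w :: l)) (GG h l)
    simp only [hd]; linarith
  have d0 : d 0 = 0 := by simp [hd, hg.GG_cons_zero l]
  have step : ∀ w : ℝ, w ≠ 0 → |d w| ≤ (|d (2*w)| + 36*B*|w|)/4 := by
    intro w hw
    have K := hg.key l (2*w) w
    have e1 : (2*w)^2 * (GG h (w :: l) - GG h l) - w^2 * (GG h ((2*w) :: l) - GG h l)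
        = w^2 * (4 * d w - d (2*w)) := by simp only [hd]; ring
    rw [e1, abs_mul, abs_of_nonneg (sq_nonneg w)] at K
    have h2w : |2*w|^3 = 8 * |w|^3 := by
      rw [abs_mul, abs_two, mul_pow]; norm_num
    rw [h2w] at K
    have hw2 : 0 < w^2 := by positivity
    have hcube : |w|^3 = |w| * w^2 := by
      rw [pow_succ, sq_abs]; ring
    have h36 : |4 * d w - d (2*w)| ≤ 36 * B * |w| := by
      rw [hcube] at K
      have := le_of_mul_le_mul_right (by nlinarith : |4 * d w - d (2*w)| * w^2 ≤ (36 * B * |w|) * w^2) hw2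
      exact this
    have t := abs_sub (4 * d w) (d (2*w))
    have e4 : |4 * d w| = 4 * |d w| := by rw [abs_mul]; norm_num
    have t2 : |4 * d w| ≤ |4 * d w - d (2*w)| + |d (2*w)| := by
      have := abs_sub_abs_le_abs_sub (4 * d w) (d (2*w))
      linarith [abs_nonneg (d (2*w))]
    rw [e4] at t2
    linarith
  have ind : ∀ k : ℕ, ∀ w : ℝ, |w| ≤ 1 → |d w| ≤ 2*B*(1/4:ℝ)^k + 24*B*|w| := by
    intro k
    induction k with
    | zero =>
      intro w hw
      have := db w
      simp only [pow_zero, mul_one]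
      nlinarith [abs_nonneg w]
    | succ k ih =>
      intro w hw
      rcases eq_or_ne w 0 with rfl | hw0
      · rw [d0]; simp; positivity
      rcases le_or_gt |2*w| 1 with h2 | h2
      · have hs := step w hw0
        have hih := ih (2*w) h2
        have habs2 : |2*w| = 2*|w| := by rw [abs_mul, abs_two]
        rw [habs2] at hih
        have hp : ((1:ℝ)/4)^(k+1) = (1/4)^k/4 := by rw [pow_succ]; ring
        rw [hp]
        nlinarith [abs_nonneg w]
      · have hwge : (1:ℝ)/2 < |w| := by
          have habs2 : |2*w| = 2*|w| := by rw [abs_mul, abs_two]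
          rw [habs2] at h2; linarith
        have := db w
        have hpow : (0:ℝ) ≤ (1/4:ℝ)^(k+1) := by positivity
        nlinarith
  have small : |u| ≤ 1 → |d u| ≤ 24*B*|u| := by
    intro hu
    have hlim : Filter.Tendsto (fun k : ℕ => 2*B*(1/4:ℝ)^k + 24*B*|u|) Filter.atTop
        (nhds (2*B*0 + 24*B*|u|)) := by
      exact (tendsto_const_nhds.mul
        (tendsto_pow_atTop_nhds_zero_of_lt_one (by norm_num) (by norm_num))).add tendsto_const_nhds
    have hle := ge_of_tendsto' hlim (fun k => ind k u hu)
    simpa using hle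
  rcases le_or_gt |u| 1 with hu | hu
  · have := small hu
    nlinarith [sq_nonneg u, abs_nonneg u]
  · have := db u
    have hsq : 1 < u^2 := by nlinarith [sq_abs u]
    nlinarith [abs_nonneg u]

noncomputable def sqL (l : List ℝ) : ℝ := (l.map (fun x => x^2)).sum
noncomputable def sL (l : List ℝ) : ℝ := Real.sqrt (sqL l)
noncomputable def c3L (l : List ℝ) : ℝ := (l.map (fun x => |x|^3)).sum

lemma sqL_nonneg (l : List ℝ) : 0 ≤ sqL l := by
  apply List.sum_nonneg
  intro x hx
  obtain ⟨y, -, rfl⟩ := List.mem_map.1 hx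
  positivity

lemma c3L_nonneg (l : List ℝ) : 0 ≤ c3L l := by
  apply List.sum_nonneg
  intro x hx
  obtain ⟨y, -, rfl⟩ := List.mem_map.1 hx
  positivity

lemma sqL_cons (x : ℝ) (l : List ℝ) : sqL (x :: l) = x^2 + sqL l := by simp [sqL]

lemma c3L_cons (x : ℝ) (l : List ℝ) : c3L (x :: l) = |x|^3 + c3L l := by simp [c3L]

lemma sL_nonneg (l : List ℝ) : 0 ≤ sL l := Real.sqrt_nonneg _

lemma abs_le_sL_cons (a : ℝ) (l : List ℝ) : |a| ≤ sL (a :: l) := by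
  rw [sL, sqL_cons, ← Real.sqrt_sq_eq_abs]
  exact Real.sqrt_le_sqrt (by linarith [sqL_nonneg l])

lemma sqL_perm {l l' : List ℝ} (hp : l.Perm l') : sqL l = sqL l' :=
  List.Perm.sum_eq (hp.map _)

lemma c3L_perm {l l' : List ℝ} (hp : l.Perm l') : c3L l = c3L l' :=
  List.Perm.sum_eq (hp.map _)

set_option maxHeartbeats 1000000 in
lemma Good.split (hg : Good h B) (l : List ℝ) {a u v : ℝ} (huv : u^2 + v^2 = a^2) :
    |HL h (a :: l) - HL h (u :: v :: l)| ≤ 15 * B * (1 + sL (a :: l)) * |a|^3 := by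
  have hB0 : 0 < B := hg.pos
  have hua : |u| ≤ |a| := by
    nlinarith [sq_abs u, sq_abs a, abs_nonneg u, abs_nonneg a, sq_nonneg v]
  have hva : |v| ≤ |a| := by
    nlinarith [sq_abs v, sq_abs a, abs_nonneg v, abs_nonneg a, sq_nonneg u]
  have hs : |a| ≤ sL (a :: l) := abs_le_sL_cons a l
  have hs0 : 0 ≤ sL (a :: l) := sL_nonneg _
  have Ea := hg.expand l a
  have E1 := hg.expand (v :: l) u
  have E2 := hg.expand l v
  have edv := hg.GG_lip l v
  have e : HL h (a :: l) - HL h (u :: v :: l) =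
      (HL h (a :: l) - HL h l - a^2/2 * GG h l)
      + (-(u^2/2 * (GG h (v :: l) - GG h l)))
      - (HL h (u :: v :: l) - HL h (v :: l) - u^2/2 * GG h (v :: l))
      - (HL h (v :: l) - HL h l - v^2/2 * GG h l) := by
    have ha2 : a^2 = u^2 + v^2 := huv.symm
    rw [ha2]; ring
  rw [e]
  have tri := abs_comb4 (a := HL h (a :: l) - HL h l - a^2/2 * GG h l)
    (b := -(u^2/2 * (GG h (v :: l) - GG h l)))
    (c := HL h (u :: v :: l) - HL h (v :: l) - u^2/2 * GG h (v :: l))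
    (d := HL h (v :: l) - HL h l - v^2/2 * GG h l)
  rw [abs_neg, abs_mul, abs_of_nonneg (by positivity : (0:ℝ) ≤ u^2/2)] at tri
  have f1 : |u|^3 ≤ |a|^3 := pow_le_pow_left₀ (abs_nonneg u) hua 3
  have f2 : |v|^3 ≤ |a|^3 := pow_le_pow_left₀ (abs_nonneg v) hva 3
  have f3 : u^2/2 ≤ |a|^2/2 := by
    nlinarith [sq_abs u, sq_abs a, mul_self_le_mul_self (abs_nonneg u) hua]
  have f4 : |v| + v^2 ≤ |a| + |a|^2 := by
    nlinarith [sq_abs v, sq_abs a, mul_self_le_mul_self (abs_nonneg v) hva]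
  have edv2 : |GG h (v :: l) - GG h l| ≤ 24 * B * (|a| + |a|^2) := by
    refine edv.trans ?_
    have := mul_le_mul_of_nonneg_left f4 (by positivity : (0:ℝ) ≤ 24 * B)
    linarith
  have g1 : u^2/2 * |GG h (v :: l) - GG h l| ≤ |a|^2/2 * (24 * B * (|a| + |a|^2)) :=
    mul_le_mul f3 edv2 (abs_nonneg _) (by positivity)
  have g2 : |a|^2/2 * (24 * B * (|a| + |a|^2)) = 12*B*|a|^3 + 12*B*(|a|^3*|a|) := by ring
  have g3 : 12*B*(|a|^3*|a|) ≤ 12*B*(|a|^3 * sL (a :: l)) := by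
    have := mul_le_mul_of_nonneg_left hs (by positivity : (0:ℝ) ≤ |a|^3)
    nlinarith
  have g4 : B * |u|^3 ≤ B * |a|^3 := mul_le_mul_of_nonneg_left f1 hB0.le
  have g5 : B * |v|^3 ≤ B * |a|^3 := mul_le_mul_of_nonneg_left f2 hB0.le
  have hBs : 0 ≤ B * (|a|^3 * sL (a :: l)) := by positivity
  have goal2 : 15 * B * (1 + sL (a :: l)) * |a|^3
      = 15*B*|a|^3 + 15*(B*(|a|^3 * sL (a :: l))) := by ring
  rw [goal2]
  have g1' : u^2/2 * |GG h (v :: l) - GG h l| ≤ 12*B*|a|^3 + 12*(B*(|a|^3 * sL (a :: l))) := by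
    rw [g2] at g1
    have : 12*B*(|a|^3*|a|) ≤ 12*(B*(|a|^3 * sL (a :: l))) := by linarith [g3]
    linarith
  linarith [tri, Ea, E1, E2, g1']

noncomputable def rr : ℝ := (Real.sqrt 2)⁻¹

noncomputable def fdiv (x : ℝ) : ℝ := x / Real.sqrt 2

noncomputable def SpL (l : List ℝ) : List ℝ := l.map fdiv ++ l.map fdiv

lemma sqrt2_pos : (0:ℝ) < Real.sqrt 2 := Real.sqrt_pos.2 (by norm_num)

lemma one_lt_sqrt2 : (1:ℝ) < Real.sqrt 2 := by
  rw [show (1:ℝ) = Real.sqrt 1 from (Real.sqrt_one).symm]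
  exact Real.sqrt_lt_sqrt (by norm_num) (by norm_num)

lemma rr_nonneg : 0 ≤ rr := by rw [rr]; positivity

lemma rr_lt_one : rr < 1 := by
  rw [rr]
  exact inv_lt_one_of_one_lt₀ one_lt_sqrt2

lemma rr_le_34 : rr ≤ 3/4 := by
  have h : (4:ℝ)/3 ≤ Real.sqrt 2 := by
    rw [show (4:ℝ)/3 = Real.sqrt ((4/3)^2) from (Real.sqrt_sq (by norm_num)).symm]
    exact Real.sqrt_le_sqrt (by norm_num)
  rw [rr]
  calc (Real.sqrt 2)⁻¹ ≤ ((4:ℝ)/3)⁻¹ := by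
        apply inv_anti₀ (by norm_num) h
    _ ≤ 3/4 := by norm_num

lemma fdiv_eq (x : ℝ) : fdiv x = x * rr := by rw [fdiv, rr, div_eq_mul_inv]

lemma fdiv_sq (x : ℝ) : (fdiv x)^2 = x^2 / 2 := by
  rw [fdiv, div_pow, Real.sq_sqrt (by norm_num : (0:ℝ) ≤ 2)]

lemma fdiv_zero : fdiv 0 = 0 := by simp [fdiv]

lemma abs_fdiv_cube (x : ℝ) : |fdiv x|^3 = |x|^3 * (rr/2) := by
  rw [fdiv_eq, abs_mul, abs_of_nonneg rr_nonneg, mul_pow]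
  have h3 : rr^3 = rr * rr^2 := by ring
  have h2 : rr^2 = 1/2 := by
    rw [rr, ← Real.sqrt_inv]
    rw [Real.sq_sqrt (by norm_num : (0:ℝ) ≤ 2⁻¹)]
    norm_num
  rw [h3, h2]; ring

lemma sqL_append (l₁ l₂ : List ℝ) : sqL (l₁ ++ l₂) = sqL l₁ + sqL l₂ := by
  simp [sqL]

lemma c3L_append (l₁ l₂ : List ℝ) : c3L (l₁ ++ l₂) = c3L l₁ + c3L l₂ := by
  simp [c3L]

lemma sqL_map_fdiv (l : List ℝ) : sqL (l.map fdiv) = sqL l / 2 := by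
  induction l with
  | nil => simp [sqL]
  | cons x l ih =>
    rw [List.map_cons, sqL_cons, sqL_cons, ih, fdiv_sq]; ring

lemma c3L_map_fdiv (l : List ℝ) : c3L (l.map fdiv) = c3L l * (rr/2) := by
  induction l with
  | nil => simp [c3L]
  | cons x l ih =>
    rw [List.map_cons, c3L_cons, c3L_cons, ih, abs_fdiv_cube]; ring

lemma sqL_SpL (l : List ℝ) : sqL (SpL l) = sqL l := by
  rw [SpL, sqL_append, sqL_map_fdiv]; ring

lemma c3L_SpL (l : List ℝ) : c3L (SpL l) = c3L l * rr := by
  rw [SpL, c3L_append, c3L_map_fdiv]; ring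

lemma sqL_iter (l : List ℝ) (k : ℕ) : sqL (SpL^[k] l) = sqL l := by
  induction k with
  | zero => rfl
  | succ k ih => rw [Function.iterate_succ_apply', sqL_SpL, ih]

lemma c3L_iter (l : List ℝ) (k : ℕ) : c3L (SpL^[k] l) = c3L l * rr^k := by
  induction k with
  | zero => simp
  | succ k ih => rw [Function.iterate_succ_apply', c3L_SpL, ih, pow_succ]; ring

lemma sqL_replicate (p : ℕ) (x : ℝ) : sqL (List.replicate p x) = p * x^2 := by
  induction p with
  | zero => simp [sqL]
  | succ p ih => rw [List.replicate_succ, sqL_cons, ih]; push_cast; ring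

-- permutation helpers
lemma perm_cons_mid (x : ℝ) (l e : List ℝ) : (x :: (l ++ e)).Perm (l ++ (x :: e)) :=
  List.perm_middle.symm

lemma perm_two_mid (u v : ℝ) (l e : List ℝ) : (u :: v :: (l ++ e)).Perm (l ++ (u :: v :: e)) :=
  ((perm_cons_mid v l e).cons u).trans (perm_cons_mid u l (v :: e))

lemma perm4 (A C D : List ℝ) {BB : List ℝ} : ((A ++ BB) ++ (C ++ D)).Perm ((A ++ C) ++ (BB ++ D)) := by
  have inner : (BB ++ (C ++ D)).Perm (C ++ (BB ++ D)) := by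
    have e1 : BB ++ (C ++ D) = (BB ++ C) ++ D := (List.append_assoc _ _ _).symm
    have e2 : (C ++ BB) ++ D = C ++ (BB ++ D) := List.append_assoc _ _ _
    rw [e1, ← e2]
    exact List.perm_append_comm.append_right D
  rw [List.append_assoc, List.append_assoc]
  exact inner.append_left A

lemma SpL_perm {l l' : List ℝ} (hp : l.Perm l') : (SpL l).Perm (SpL l') :=
  (hp.map fdiv).append (hp.map fdiv)

lemma SpL_iter_perm {l l' : List ℝ} (hp : l.Perm l') (k : ℕ) :
    (SpL^[k] l).Perm (SpL^[k] l') := by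
  induction k with
  | zero => exact hp
  | succ k ih => rw [Function.iterate_succ_apply', Function.iterate_succ_apply']; exact SpL_perm ih

lemma SpL_append (l₁ l₂ : List ℝ) : (SpL (l₁ ++ l₂)).Perm (SpL l₁ ++ SpL l₂) := by
  rw [SpL, List.map_append]
  exact perm4 _ _ _

lemma SpL_replicate (p : ℕ) (x : ℝ) : SpL (List.replicate p x) = List.replicate (2*p) (x*rr) := by
  rw [SpL, List.map_replicate, fdiv_eq, ← List.replicate_add, two_mul]

lemma SpL_iter_cons (x : ℝ) (l : List ℝ) (k : ℕ) :
    (SpL^[k] (x :: l)).Perm (List.replicate (2^k) (x * rr^k) ++ SpL^[k] l) := by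
  induction k with
  | zero => simp
  | succ k ih =>
    rw [Function.iterate_succ_apply', Function.iterate_succ_apply']
    refine ((SpL_perm ih).trans ((SpL_append _ _).trans ?_))
    have e : SpL (List.replicate (2^k) (x * rr^k)) = List.replicate (2^(k+1)) (x * rr^(k+1)) := by
      rw [SpL_replicate, pow_succ, pow_succ]
      congr 1
      · ring
      · ring
    rw [e]

set_option maxHeartbeats 1000000 in
lemma Good.split_all (hg : Good h B) : ∀ (l e : List ℝ),
    |HL h (l ++ e) - HL h ((l.map fdiv ++ l.map fdiv) ++ e)| ≤ 15*B*(1+sL (l ++ e))*c3L l := by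
  intro l
  induction l with
  | nil =>
    intro e
    simp only [List.nil_append, List.map_nil, sub_self, abs_zero]
    have h1 : c3L ([] : List ℝ) = 0 := by simp [c3L]
    rw [h1, mul_zero]
  | cons x l ih =>
    intro e
    have hB0 : 0 < B := hg.pos
    have hfx : (fdiv x)^2 + (fdiv x)^2 = x^2 := by rw [fdiv_sq]; ring
    have s1 := hg.split (l ++ e) (a := x) hfx
    have s2 := ih (fdiv x :: fdiv x :: e)
    have p1 : HL h (fdiv x :: fdiv x :: (l ++ e)) = HL h (l ++ (fdiv x :: fdiv x :: e)) :=
      hg.HL_perm (perm_two_mid _ _ _ _)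
    have pp : ((l.map fdiv ++ l.map fdiv) ++ (fdiv x :: fdiv x :: e)).Perm
        (((x :: l).map fdiv ++ (x :: l).map fdiv) ++ e) := by
      have t1 : ((x :: l).map fdiv ++ (x :: l).map fdiv) ++ e
          = fdiv x :: ((l.map fdiv ++ (fdiv x :: l.map fdiv)) ++ e) := by
        simp [List.cons_append]
      have t2 : (l.map fdiv ++ (fdiv x :: l.map fdiv)).Perm
          (fdiv x :: (l.map fdiv ++ l.map fdiv)) := List.perm_middle
      have t3 : ((l.map fdiv ++ (fdiv x :: l.map fdiv)) ++ e).Perm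
          (fdiv x :: ((l.map fdiv ++ l.map fdiv) ++ e)) := t2.append_right e
      have t4 : (fdiv x :: ((l.map fdiv ++ (fdiv x :: l.map fdiv)) ++ e)).Perm
          (fdiv x :: fdiv x :: ((l.map fdiv ++ l.map fdiv) ++ e)) := t3.cons _
      rw [t1]
      exact (perm_two_mid (fdiv x) (fdiv x) (l.map fdiv ++ l.map fdiv) e).symm.trans t4.symm
    have p2 : HL h ((l.map fdiv ++ l.map fdiv) ++ (fdiv x :: fdiv x :: e))
        = HL h (((x :: l).map fdiv ++ (x :: l).map fdiv) ++ e) := hg.HL_perm pp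
    have n1 : sL (l ++ (fdiv x :: fdiv x :: e)) = sL (x :: (l ++ e)) := by
      rw [sL, sL]; congr 1
      rw [sqL_append, sqL_cons, sqL_cons, sqL_cons, sqL_append, fdiv_sq]; ring
    rw [p1] at s1
    rw [n1, p2] at s2
    have tri := abs_sub_le (HL h ((x :: l) ++ e))
      (HL h (l ++ (fdiv x :: fdiv x :: e)))
      (HL h (((x :: l).map fdiv ++ (x :: l).map fdiv) ++ e))
    have e0 : (x :: l) ++ e = x :: (l ++ e) := rfl
    rw [e0]
    have ec : c3L (x :: l) = |x|^3 + c3L l := c3L_cons x l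
    rw [ec]
    have hs0 : 0 ≤ sL (x :: (l ++ e)) := sL_nonneg _
    rw [e0] at tri
    nlinarith [tri, s1, s2, c3L_nonneg l, abs_nonneg x, pow_nonneg (abs_nonneg x) 3]

lemma Good.step_geo (hg : Good h B) (l : List ℝ) (k : ℕ) :
    |HL h (SpL^[k] l) - HL h (SpL^[k+1] l)| ≤ (15*B*(1+sL l)*c3L l) * rr^k := by
  have H := hg.split_all (SpL^[k] l) []
  rw [List.append_nil, List.append_nil] at H
  have e1 : (SpL^[k] l).map fdiv ++ (SpL^[k] l).map fdiv = SpL^[k+1] l := by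
    rw [Function.iterate_succ_apply']; rfl
  rw [e1] at H
  have e2 : sL (SpL^[k] l) = sL l := by rw [sL, sL, sqL_iter]
  have e3 : c3L (SpL^[k] l) = c3L l * rr^k := c3L_iter l k
  rw [e2, e3] at H
  calc |HL h (SpL^[k] l) - HL h (SpL^[k+1] l)| ≤ 15*B*(1+sL l)*(c3L l * rr^k) := H
    _ = (15*B*(1+sL l)*c3L l) * rr^k := by ring

lemma Good.C_nonneg (hg : Good h B) (l : List ℝ) : 0 ≤ 15*B*(1+sL l)*c3L l := by
  have h1 := sL_nonneg l
  have h2 := c3L_nonneg l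
  have h3 := hg.pos.le
  apply mul_nonneg (mul_nonneg (by linarith) (by linarith)) h2

noncomputable def LL (h : (n : ℕ) → (Fin n → ℝ) → ℝ) (l : List ℝ) : ℝ :=
  Filter.limUnder Filter.atTop (fun k => HL h (SpL^[k] l))

lemma Good.tendsto_LL (hg : Good h B) (l : List ℝ) :
    Filter.Tendsto (fun k => HL h (SpL^[k] l)) Filter.atTop (nhds (LL h l)) := by
  have hc : CauchySeq (fun k => HL h (SpL^[k] l)) := by
    apply cauchySeq_of_le_geometric rr (15*B*(1+sL l)*c3L l) rr_lt_one
    intro n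
    rw [Real.dist_eq]
    exact hg.step_geo l n
  obtain ⟨x, hx⟩ := cauchySeq_tendsto_of_complete hc
  rwa [LL, hx.limUnder_eq]

lemma Good.dist_iter (hg : Good h B) (l : List ℝ) : ∀ (m k : ℕ),
    |HL h (SpL^[k] l) - HL h (SpL^[k+m] l)| ≤ (15*B*(1+sL l)*c3L l) * rr^k * 4 := by
  intro m
  induction m with
  | zero =>
    intro k
    simp only [Nat.add_zero, sub_self, abs_zero]
    exact mul_nonneg (mul_nonneg (hg.C_nonneg l) (pow_nonneg rr_nonneg k)) (by norm_num)
  | succ m ih =>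
    intro k
    have t1 := hg.step_geo l k
    have t2 := ih (k+1)
    have e : k + (m+1) = (k+1) + m := by ring
    rw [e]
    have tri := abs_sub_le (HL h (SpL^[k] l)) (HL h (SpL^[k+1] l)) (HL h (SpL^[(k+1)+m] l))
    have hp : rr^(k+1) = rr^k * rr := pow_succ rr k
    rw [hp] at t2
    nlinarith [hg.C_nonneg l, pow_nonneg rr_nonneg k, rr_le_34, rr_nonneg,
      mul_nonneg (hg.C_nonneg l) (pow_nonneg rr_nonneg k)]

lemma Good.LL_dist (hg : Good h B) (l : List ℝ) (k : ℕ) :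
    |HL h (SpL^[k] l) - LL h l| ≤ (15*B*(1+sL l)*c3L l) * rr^k * 4 := by
  have h2 : Filter.Tendsto (fun m : ℕ => k + m) Filter.atTop Filter.atTop := by
    simpa [Nat.add_comm] using Filter.tendsto_add_atTop_nat k
  have t1 : Filter.Tendsto (fun m => HL h (SpL^[k+m] l)) Filter.atTop (nhds (LL h l)) :=
    (hg.tendsto_LL l).comp h2
  have t2 : Filter.Tendsto (fun m => |HL h (SpL^[k] l) - HL h (SpL^[k+m] l)|)
      Filter.atTop (nhds |HL h (SpL^[k] l) - LL h l|) := (tendsto_const_nhds.sub t1).abs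
  exact le_of_tendsto t2 (Filter.Eventually.of_forall (fun m => hg.dist_iter l m k))

lemma Good.LL_perm (hg : Good h B) {l l' : List ℝ} (hp : l.Perm l') : LL h l = LL h l' := by
  have e : (fun k => HL h (SpL^[k] l)) = (fun k => HL h (SpL^[k] l')) :=
    funext fun k => hg.HL_perm (SpL_iter_perm hp k)
  rw [LL, e]; rfl

lemma Good.HL_zeros (hg : Good h B) : ∀ (p : ℕ) (m : List ℝ),
    HL h (List.replicate p 0 ++ m) = HL h m := by
  intro p
  induction p with
  | zero => intro m; rfl
  | succ p ih =>
    intro m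
    rw [List.replicate_succ, List.cons_append, hg.HL_cons_zero, ih]

lemma Good.LL_cons_zero (hg : Good h B) (l : List ℝ) : LL h (0 :: l) = LL h l := by
  have e : (fun k => HL h (SpL^[k] (0 :: l))) = (fun k => HL h (SpL^[k] l)) := by
    funext k
    have hp := SpL_iter_cons 0 l k
    rw [zero_mul] at hp
    rw [hg.HL_perm hp, hg.HL_zeros]
  rw [LL, e]; rfl

set_option maxHeartbeats 1000000 in
lemma Good.merge_many (hg : Good h B) {A U V : ℝ} (hUV : U^2 + V^2 = A^2) : ∀ (p : ℕ) (X : List ℝ),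
    |HL h (List.replicate p A ++ X) - HL h (List.replicate p U ++ (List.replicate p V ++ X))|
      ≤ p * (15*B*(1+sL (List.replicate p A ++ X))*|A|^3) := by
  intro p
  induction p with
  | zero => intro X; simp
  | succ p ih =>
    intro X
    have e1 : List.replicate (p+1) A ++ X = A :: (List.replicate p A ++ X) := by
      rw [List.replicate_succ]; rfl
    have s1 := hg.split (List.replicate p A ++ X) hUV
    have p2 : HL h (U :: V :: (List.replicate p A ++ X))
        = HL h (List.replicate p A ++ (U :: V :: X)) := hg.HL_perm (perm_two_mid _ _ _ _)
    have s2 := ih (U :: V :: X)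
    have permB : (List.replicate p U ++ (List.replicate p V ++ (U :: V :: X))).Perm
        (List.replicate (p+1) U ++ (List.replicate (p+1) V ++ X)) := by
      have q1 : (List.replicate p V ++ (U :: V :: X)).Perm
          (U :: V :: (List.replicate p V ++ X)) :=
        (perm_two_mid U V (List.replicate p V) X).symm
      have q2 : (List.replicate p U ++ (List.replicate p V ++ (U :: V :: X))).Perm
          (List.replicate p U ++ (U :: V :: (List.replicate p V ++ X))) := q1.append_left _
      have q3 : (List.replicate p U ++ (U :: V :: (List.replicate p V ++ X))).Perm
          (U :: V :: (List.replicate p U ++ (List.replicate p V ++ X))) :=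
        (perm_two_mid U V (List.replicate p U) (List.replicate p V ++ X)).symm
      have q4 : (V :: (List.replicate p U ++ (List.replicate p V ++ X))).Perm
          (List.replicate p U ++ (V :: (List.replicate p V ++ X))) :=
        perm_cons_mid V _ _
      have e2 : List.replicate (p+1) U ++ (List.replicate (p+1) V ++ X)
          = U :: (List.replicate p U ++ (V :: (List.replicate p V ++ X))) := by
        rw [List.replicate_succ, List.replicate_succ]; rfl
      rw [e2]
      exact (q2.trans q3).trans (q4.cons U)
    have p3 : HL h (List.replicate p U ++ (List.replicate p V ++ (U :: V :: X)))
        = HL h (List.replicate (p+1) U ++ (List.replicate (p+1) V ++ X)) := hg.HL_perm permB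
    have n1 : sL (List.replicate p A ++ (U :: V :: X)) = sL (List.replicate (p+1) A ++ X) := by
      rw [sL, sL]; congr 1
      rw [sqL_append, sqL_append, sqL_cons, sqL_cons, sqL_replicate, sqL_replicate]
      push_cast
      nlinarith [hUV]
    have n2 : sL (A :: (List.replicate p A ++ X)) = sL (List.replicate (p+1) A ++ X) := by
      rw [e1]
    rw [p2] at s1
    rw [n2] at s1
    rw [n1, p3] at s2
    have tri := abs_sub_le (HL h (List.replicate (p+1) A ++ X))
      (HL h (List.replicate p A ++ (U :: V :: X)))
      (HL h (List.replicate (p+1) U ++ (List.replicate (p+1) V ++ X)))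
    rw [e1]
    rw [e1] at tri
    rw [n2]
    push_cast
    nlinarith [tri, s1, s2]

set_option maxHeartbeats 1000000 in
lemma Good.LL_merge (hg : Good h B) (l : List ℝ) {a u v : ℝ} (huv : u^2 + v^2 = a^2) :
    LL h (a :: l) = LL h (u :: v :: l) := by
  have hB0 : 0 < B := hg.pos
  set K : ℝ := (15*B*(1+sL (a::l))*c3L (a::l)) * 4
    + 15*B*(1+sL (a::l))*|a|^3
    + (15*B*(1+sL (u::v::l))*c3L (u::v::l)) * 4 with hK
  have key : ∀ k : ℕ, |LL h (a :: l) - LL h (u :: v :: l)| ≤ K * rr^k := by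
    intro k
    have d1 := hg.LL_dist (a :: l) k
    have d2 := hg.LL_dist (u :: v :: l) k
    -- middle comparison
    have hp1 := SpL_iter_cons a l k
    have hp2 : (SpL^[k] (u :: v :: l)).Perm
        (List.replicate (2^k) (u * rr^k) ++ (List.replicate (2^k) (v * rr^k) ++ SpL^[k] l)) := by
      have h1 := SpL_iter_cons u (v :: l) k
      have h2 := SpL_iter_cons v l k
      exact h1.trans (h2.append_left _)
    have hA : (u * rr^k)^2 + (v * rr^k)^2 = (a * rr^k)^2 := by
      have : (u * rr^k)^2 + (v * rr^k)^2 = (u^2 + v^2) * (rr^k)^2 := by ring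
      rw [this, huv]; ring
    have M := hg.merge_many hA (2^k) (SpL^[k] l)
    have m1 : HL h (SpL^[k] (a :: l))
        = HL h (List.replicate (2^k) (a * rr^k) ++ SpL^[k] l) := hg.HL_perm hp1
    have m2 : HL h (SpL^[k] (u :: v :: l))
        = HL h (List.replicate (2^k) (u * rr^k)
            ++ (List.replicate (2^k) (v * rr^k) ++ SpL^[k] l)) := hg.HL_perm hp2
    -- norm of the replicate list
    have nrm : sL (List.replicate (2^k) (a * rr^k) ++ SpL^[k] l) = sL (a :: l) := by
      rw [sL, sL]; congr 1
      rw [sqL_append, sqL_replicate, sqL_iter, sqL_cons]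
      have h2 : ((2:ℝ)^k) * (a * rr^k)^2 = a^2 * (2 * rr^2)^k := by
        rw [mul_pow, mul_pow]; ring
      have h3 : rr^2 = 1/2 := by
        rw [rr, ← Real.sqrt_inv, Real.sq_sqrt (by norm_num : (0:ℝ) ≤ 2⁻¹)]
        norm_num
      push_cast
      rw [h2, h3]
      norm_num
    have habs : |a * rr^k|^3 = |a|^3 * rr^k * (rr^k)^2 := by
      rw [abs_mul, abs_of_nonneg (pow_nonneg rr_nonneg k), mul_pow]
      ring
    have hr2 : ((2:ℝ)^k) * ((rr^k)^2) = 1 := by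
      have h3 : rr^2 = 1/2 := by
        rw [rr, ← Real.sqrt_inv, Real.sq_sqrt (by norm_num : (0:ℝ) ≤ 2⁻¹)]
        norm_num
      have : ((2:ℝ)^k) * ((rr^k)^2) = (2 * rr^2)^k := by rw [mul_pow, ← pow_mul, ← pow_mul]; ring_nf
      rw [this, h3]; norm_num
    have mid : |HL h (SpL^[k] (a :: l)) - HL h (SpL^[k] (u :: v :: l))|
        ≤ 15*B*(1+sL (a::l))*|a|^3 * rr^k := by
      rw [m1, m2]
      refine M.trans ?_
      rw [nrm, habs]
      have e : ((2:ℝ)^k) * (15*B*(1+sL (a::l))*(|a|^3 * rr^k * (rr^k)^2))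
          = (15*B*(1+sL (a::l))*|a|^3 * rr^k) * (((2:ℝ)^k) * ((rr^k)^2)) := by ring
      have ecast : ((2^k : ℕ) : ℝ) = (2:ℝ)^k := by push_cast; ring
      rw [ecast, e, hr2, mul_one]
    have tri1 := abs_sub_le (LL h (a :: l)) (HL h (SpL^[k] (a :: l))) (LL h (u :: v :: l))
    have tri2 := abs_sub_le (HL h (SpL^[k] (a :: l))) (HL h (SpL^[k] (u :: v :: l)))
      (LL h (u :: v :: l))
    have d1' : |LL h (a :: l) - HL h (SpL^[k] (a :: l))|
        = |HL h (SpL^[k] (a :: l)) - LL h (a :: l)| := abs_sub_comm _ _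
    have d2' : |HL h (SpL^[k] (u :: v :: l)) - LL h (u :: v :: l)|
        ≤ (15*B*(1+sL (u::v::l))*c3L (u::v::l)) * rr^k * 4 := hg.LL_dist _ k
    rw [hK]
    have expand : ((15*B*(1+sL (a::l))*c3L (a::l)) * 4
        + 15*B*(1+sL (a::l))*|a|^3
        + (15*B*(1+sL (u::v::l))*c3L (u::v::l)) * 4) * rr^k
        = (15*B*(1+sL (a::l))*c3L (a::l)) * rr^k * 4
        + 15*B*(1+sL (a::l))*|a|^3 * rr^k
        + (15*B*(1+sL (u::v::l))*c3L (u::v::l)) * rr^k * 4 := by ring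
    rw [expand]
    rw [d1'] at tri1
    linarith [tri1, tri2, d1, d2', mid]
  have hK0 : 0 ≤ K := by
    have := (abs_nonneg (LL h (a :: l) - LL h (u :: v :: l))).trans (key 0)
    simpa using this
  have hlim : Filter.Tendsto (fun k : ℕ => K * rr^k) Filter.atTop (nhds 0) := by
    have := (tendsto_pow_atTop_nhds_zero_of_lt_one rr_nonneg rr_lt_one).const_mul K
    simpa using this
  have hle : |LL h (a :: l) - LL h (u :: v :: l)| ≤ 0 := ge_of_tendsto' hlim key
  have := abs_nonneg (LL h (a :: l) - LL h (u :: v :: l))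
  have h0 : LL h (a :: l) - LL h (u :: v :: l) = 0 := by
    rw [← abs_eq_zero]; linarith
  linarith [sub_eq_zero.1 h0, h0]

lemma Good.LL_collapse (hg : Good h B) : ∀ (l e : List ℝ), LL h (l ++ e) = LL h (sL l :: e) := by
  intro l
  induction l with
  | nil =>
    intro e
    have h0 : sL ([] : List ℝ) = 0 := by
      rw [sL]; simp [sqL]
    rw [List.nil_append, h0, hg.LL_cons_zero]
  | cons x l ih =>
    intro e
    have p1 : LL h ((x :: l) ++ e) = LL h (l ++ (x :: e)) := hg.LL_perm (perm_cons_mid x l e)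
    rw [p1, ih (x :: e)]
    have huv : (sL l)^2 + x^2 = (sL (x :: l))^2 := by
      rw [sL, sL, Real.sq_sqrt (sqL_nonneg l), sqL_cons,
        Real.sq_sqrt (by linarith [sqL_nonneg l, sq_nonneg x] : (0:ℝ) ≤ x^2 + sqL l)]
      ring
    exact (hg.LL_merge e huv).symm

end Stmt19

open Stmt19 in
/-- Berry–Esseen type theorem (Theorem 2.1 of Götze–Naumov–Ulyanov). -/
theorem stmt_19 :
    ∃ c : ℝ, 0 < c ∧
      ∀ (h : (n : ℕ) → (Fin n → ℝ) → ℝ) (B : ℝ), 0 < B →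
        (∀ n, ContDiff ℝ 3 (h n)) →
        -- (1) inserting a zero argument reduces `h (n+1)` to `h n`
        (∀ (n : ℕ) (j : Fin (n + 1)) (ε : Fin n → ℝ),
          h (n + 1) (Fin.insertNth j 0 ε) = h n ε) →
        -- (2) first partial derivatives vanish whenever the coordinate is zero
        (∀ (n : ℕ) (j : Fin n) (ε : Fin n → ℝ), ε j = 0 → pd j (h n) ε = 0) →
        -- (3) symmetry under permutations
        (∀ (n : ℕ) (σ : Equiv.Perm (Fin n)) (ε : Fin n → ℝ), h n (ε ∘ σ) = h n ε) →
        -- (4) uniform bound on the mixed partial derivatives `D^α`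
        (∀ (n r : ℕ), r ≤ 3 → ∀ (ι : Fin r → Fin n), Function.Injective ι →
          ∀ α : Fin r → ℕ, (∀ q, 2 ≤ α q) → (∑ q, (α q - 2)) ≤ 1 →
          ∀ ε : Fin n → ℝ, |pdMulti ι α (h n) ε| ≤ B) →
        ∃ hinf : ℝ → ℝ,
          ∀ (n : ℕ) (ε : Fin n → ℝ),
            |h n ε - hinf (Real.sqrt (∑ j, ε j ^ 2))|
              ≤ c * B * max 1 (Real.sqrt (∑ j, ε j ^ 2) ^ 3) * ∑ j, |ε j| ^ 3 := by
  refine ⟨120, by norm_num, ?_⟩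
  intro h B hB hsm hins hvan hsym hbdd
  have hg : Good h B := ⟨hB, hsm, hins, hvan, hsym, hbdd⟩
  refine ⟨fun t => LL h [t], ?_⟩
  intro n ε
  set l := List.ofFn ε with hl
  have e : l.length = n := List.length_ofFn (f := ε)
  have hHL : HL h l = h n ε := by
    rw [HL, h_cast h e ε]
    congr 1
    funext i
    exact List.get_ofFn ε i
  have hsq : sqL l = ∑ j, ε j ^ 2 := by
    rw [sqL, hl, List.map_ofFn, List.sum_ofFn]
    rfl
  have hc3 : c3L l = ∑ j, |ε j| ^ 3 := by
    rw [c3L, hl, List.map_ofFn, List.sum_ofFn]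
    rfl
  have hsL : sL l = Real.sqrt (∑ j, ε j ^ 2) := by rw [sL, hsq]
  have hcollapse : LL h l = LL h [sL l] := by
    have hcl := hg.LL_collapse l []
    rwa [List.append_nil] at hcl
  have hd := hg.LL_dist l 0
  simp only [Function.iterate_zero_apply, pow_zero, mul_one] at hd
  -- hd : |HL h l - LL h l| ≤ (15*B*(1+sL l)*c3L l) * 4
  have hs := sL_nonneg l
  have hc := c3L_nonneg l
  have hmax1 : (1:ℝ) ≤ max 1 ((sL l)^3) := le_max_left _ _
  have hmax : 1 + sL l ≤ 2 * max 1 ((sL l)^3) := by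
    rcases le_or_gt (sL l) 1 with hs1 | hs1
    · linarith
    · have h2 : 1 ≤ (sL l)^2 := by nlinarith
      have h3 : sL l ≤ (sL l)^3 := by
        nlinarith [mul_nonneg (by linarith : (0:ℝ) ≤ (sL l)^2 - 1) hs]
      have h4 := le_max_right 1 ((sL l)^3)
      linarith
  have hfinal : (15*B*(1+sL l)*c3L l) * 4 ≤ 120 * B * max 1 ((sL l)^3) * c3L l := by
    have step : (1 + sL l) * c3L l ≤ (2 * max 1 ((sL l)^3)) * c3L l :=
      mul_le_mul_of_nonneg_right hmax hc
    nlinarith [hB.le, step, mul_nonneg hB.le hc]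
  calc |h n ε - LL h [Real.sqrt (∑ j, ε j ^ 2)]|
      = |HL h l - LL h l| := by rw [hHL, ← hsL, ← hcollapse]
    _ ≤ (15*B*(1+sL l)*c3L l) * 4 := hd
    _ ≤ 120 * B * max 1 ((sL l)^3) * c3L l := hfinal
    _ = 120 * B * max 1 (Real.sqrt (∑ j, ε j ^ 2) ^ 3) * ∑ j, |ε j| ^ 3 := by
        rw [hsL, hc3]
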